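/- A symmetric tensor A of order m and dimension n is strictly copositive if and only if no principal sub-tensor of A has a non-positive H^{++}-eigenvalue, i.e., no principal sub-tensor B admits λ ≤ 0 and a strictly positive vector v with B v^{m-1} = λ v^{[m-1]}. -/

import Mathlib

open Finset

/-- `A x^m` for an `m`-order `n`-dimensional tensor `A`. -/
noncomputable def tpow {m n : ℕ} (A : (Fin m → Fin n) → ℝ) (x : Fin n → ℝ) : ℝ :=
  ∑ f : Fin m → Fin n, A f * ∏ k, x (f k)

/-- `A` is symmetric: entries invariant under permutations of indices. -/
def SymT {m n : ℕ} (A : (Fin m → Fin n) → ℝ) : Prop :=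
  ∀ (σ : Equiv.Perm (Fin m)) (f : Fin m → Fin n), A (f ∘ σ) = A f

/-- `A` is copositive. -/
def CoposT {m n : ℕ} (A : (Fin m → Fin n) → ℝ) : Prop :=
  ∀ x : Fin n → ℝ, (∀ i, 0 ≤ x i) → 0 ≤ tpow A x

/-- `A` is strictly copositive. -/
def StrictCoposT {m n : ℕ} (A : (Fin m → Fin n) → ℝ) : Prop :=
  ∀ x : Fin n → ℝ, (∀ i, 0 ≤ x i) → x ≠ 0 → 0 < tpow A x

/-- `(A_S x^{m-1})_i` : the `i`-th component of the contraction of the principal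
sub-tensor of `A` on the index set `S` with `x` taken `m-1` times. -/
noncomputable def tcontr {m n : ℕ} (hm : 0 < m) (A : (Fin m → Fin n) → ℝ)
    (S : Finset (Fin n)) (x : Fin n → ℝ) (i : Fin n) : ℝ :=
  ∑ f ∈ Finset.univ.filter
      (fun f : Fin m → Fin n => f ⟨0, hm⟩ = i ∧ ∀ k, f k ∈ S),
    A f * ∏ k ∈ Finset.univ.erase (⟨0, hm⟩ : Fin m), x (f k)

-- homogeneity
lemma tpow_smul {m n : ℕ} (A : (Fin m → Fin n) → ℝ) (c : ℝ) (x : Fin n → ℝ) :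
    tpow A (fun i => c * x i) = c ^ m * tpow A x := by
  unfold tpow
  rw [Finset.mul_sum]
  refine Finset.sum_congr rfl fun f _ => ?_
  rw [Finset.prod_mul_distrib, Finset.prod_const]
  simp [Finset.card_univ]
  ring

-- pairing
lemma pairing {m n : ℕ} (hm : 0 < m) (A : (Fin m → Fin n) → ℝ) (S : Finset (Fin n))
    (x : Fin n → ℝ) :
    ∑ i ∈ S, x i * tcontr hm A S x i
      = ∑ f ∈ Finset.univ.filter (fun f : Fin m → Fin n => ∀ k, f k ∈ S),
          A f * ∏ k, x (f k) := by
  rw [← Finset.sum_fiberwise_of_maps_to (g := fun f : Fin m → Fin n => f ⟨0, hm⟩)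
    (fun f hf => by simpa using (Finset.mem_filter.mp hf).2 ⟨0, hm⟩)]
  refine Finset.sum_congr rfl fun i _ => ?_
  rw [tcontr, Finset.mul_sum]
  rw [Finset.filter_filter]
  refine Finset.sum_congr (by ext f; simp; tauto) fun f hf => ?_
  have hf0 : f ⟨0, hm⟩ = i := by simp at hf; tauto
  rw [← Finset.mul_prod_erase Finset.univ (fun k => x (f k)) (Finset.mem_univ ⟨0, hm⟩), hf0]
  ring

-- symmetry lemma
lemma sym_contr {m n : ℕ} (hm : 0 < m) (A : (Fin m → Fin n) → ℝ) (hA : SymT A)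
    (S : Finset (Fin n)) (y : Fin n → ℝ) (i : Fin n) (k : Fin m) :
    ∑ f ∈ Finset.univ.filter (fun f : Fin m → Fin n => f k = i ∧ ∀ j, f j ∈ S),
        A f * ∏ j ∈ Finset.univ.erase k, y (f j) = tcontr hm A S y i := by
  unfold tcontr
  set k0 : Fin m := ⟨0, hm⟩
  refine Finset.sum_nbij' (fun f => f ∘ Equiv.swap k0 k) (fun f => f ∘ Equiv.swap k0 k)
    ?_ ?_ ?_ ?_ ?_
  · intro f hf
    simp only [Finset.mem_filter, Finset.mem_univ, true_and] at hf ⊢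
    refine ⟨?_, fun j => hf.2 _⟩
    simp [Equiv.swap_apply_left, hf.1]
  · intro f hf
    simp only [Finset.mem_filter, Finset.mem_univ, true_and] at hf ⊢
    refine ⟨?_, fun j => hf.2 _⟩
    simp [Equiv.swap_apply_right, hf.1]
  · intro f _; ext j; simp
  · intro f _; ext j; simp
  · intro f hf
    rw [hA (Equiv.swap k0 k) f]
    congr 1
    refine Finset.prod_nbij' (fun j => Equiv.swap k0 k j) (fun j => Equiv.swap k0 k j)
      ?_ ?_ ?_ ?_ ?_
    · intro j hj
      simp only [Finset.mem_erase, Finset.mem_univ, and_true] at hj ⊢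
      intro h
      apply hj
      have := (Equiv.swap k0 k).injective (a₁ := j) (a₂ := k)
      simp only [Equiv.swap_apply_right] at this
      exact this h
    · intro j hj
      simp only [Finset.mem_erase, Finset.mem_univ, and_true] at hj ⊢
      intro h
      apply hj
      have := (Equiv.swap k0 k).injective (a₁ := j) (a₂ := k0)
      simp only [Equiv.swap_apply_left] at this
      exact this h
    · intro j _; simp
    · intro j _; simp
    · intro j _; simp

lemma backward {m n : ℕ} (hm : 0 < m) (A : (Fin m → Fin n) → ℝ) (hA : SymT A)
    (h : ¬ StrictCoposT A) :
    ∃ (S : Finset (Fin n)) (lam : ℝ) (v : Fin n → ℝ),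
      S.Nonempty ∧ lam ≤ 0 ∧ (∀ i ∈ S, 0 < v i) ∧
      ∀ i ∈ S, tcontr hm A S v i = lam * v i ^ (m - 1) := by
  unfold StrictCoposT at h
  push_neg at h
  obtain ⟨x, hx0, hxne, hxle⟩ := h
  -- normalize x
  obtain ⟨i0, hi0⟩ := Function.ne_iff.mp hxne
  have hi0' : 0 < x i0 := lt_of_le_of_ne (hx0 i0) (Ne.symm hi0)
  set t : ℝ := ∑ i, x i ^ m with ht
  have htpos : 0 < t :=
    Finset.sum_pos' (fun i _ => pow_nonneg (hx0 i) m)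
      ⟨i0, Finset.mem_univ _, pow_pos hi0' m⟩
  set c : ℝ := t ^ (-(m : ℝ)⁻¹) with hc
  have hcpos : 0 < c := Real.rpow_pos_of_pos htpos _
  have hmR : (m : ℝ) ≠ 0 := Nat.cast_ne_zero.mpr hm.ne'
  have hcm : c ^ m * t = 1 := by
    rw [hc, ← Real.rpow_natCast (t ^ (-(m:ℝ)⁻¹)) m, ← Real.rpow_mul htpos.le]
    rw [neg_mul, inv_mul_cancel₀ hmR]
    rw [Real.rpow_neg_one]
    exact inv_mul_cancel₀ htpos.ne'
  set K : Set (Fin n → ℝ) := {y | (∀ i, 0 ≤ y i) ∧ ∑ i, y i ^ m = 1} with hK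
  set z : Fin n → ℝ := fun i => c * x i with hz
  have hzK : z ∈ K := by
    constructor
    · intro i; exact mul_nonneg hcpos.le (hx0 i)
    · simp only [hz, mul_pow, ← Finset.mul_sum]
      exact hcm
  have hzle : tpow A z ≤ 0 := by
    have := tpow_smul A c x
    rw [hz, this]
    exact mul_nonpos_of_nonneg_of_nonpos (pow_nonneg hcpos.le m) hxle
  -- compactness of K
  have hKclosed : IsClosed K := by
    have h1 : IsClosed {y : Fin n → ℝ | ∀ i, 0 ≤ y i} := by
      have he : {y : Fin n → ℝ | ∀ i, 0 ≤ y i} = ⋂ i, {y | 0 ≤ y i} := by ext; simp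
      rw [he]
      exact isClosed_iInter fun i => isClosed_le continuous_const (continuous_apply i)
    have h2 : IsClosed {y : Fin n → ℝ | ∑ i, y i ^ m = 1} :=
      isClosed_eq (by fun_prop) continuous_const
    have he : K = {y : Fin n → ℝ | ∀ i, 0 ≤ y i} ∩ {y : Fin n → ℝ | ∑ i, y i ^ m = 1} := by
      rw [hK, Set.setOf_and]
    rw [he]
    exact h1.inter h2
  have hKsub : K ⊆ Set.Icc 0 1 := by
    intro y hy
    rw [Set.mem_Icc]
    constructor
    · intro i; exact hy.1 i
    · intro i
      have h1 : y i ^ m ≤ 1 := by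
        have := Finset.single_le_sum (f := fun j => y j ^ m)
          (fun j _ => pow_nonneg (hy.1 j) m) (Finset.mem_univ i)
        rw [hy.2] at this
        exact this
      exact (pow_le_one_iff_of_nonneg (hy.1 i) hm.ne').mp h1
  have hKcomp : IsCompact K := isCompact_Icc.of_isClosed_subset hKclosed hKsub
  have hcont : Continuous (tpow A) := by
    unfold tpow
    exact continuous_finset_sum _ fun f _ =>
      continuous_const.mul (continuous_finset_prod _ fun k _ => continuous_apply _)
  obtain ⟨y, hyK, hymin⟩ := hKcomp.exists_isMinOn ⟨z, hzK⟩ hcont.continuousOn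
  have hy0 : ∀ i, 0 ≤ y i := hyK.1
  have hysum : ∑ i, y i ^ m = 1 := hyK.2
  set lam : ℝ := tpow A y with hlamdef
  have hlam : lam ≤ 0 := le_trans (hymin hzK) hzle
  set S : Finset (Fin n) := Finset.univ.filter (fun i => 0 < y i) with hSdef
  have hyS : ∀ i, i ∉ S → y i = 0 := by
    intro i hi
    simp only [hSdef, Finset.mem_filter, Finset.mem_univ, true_and, not_lt] at hi
    exact le_antisymm hi (hy0 i)
  have hSmem : ∀ i ∈ S, 0 < y i := by
    intro i hi
    simpa [hSdef] using (Finset.mem_filter.mp hi).2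
  have hSne : S.Nonempty := by
    rw [Finset.nonempty_iff_ne_empty]
    intro hemp
    have : ∑ i, y i ^ m = 0 := by
      apply Finset.sum_eq_zero
      intro i _
      rw [hyS i (by simp [hemp]), zero_pow hm.ne']
    rw [hysum] at this
    norm_num at this
  classical
  set F : Finset (Fin m → Fin n) :=
    Finset.univ.filter (fun f : Fin m → Fin n => ∀ k, f k ∈ S) with hFdef
  set g : (Fin n → ℝ) → ℝ := fun w => ∑ f ∈ F, A f * ∏ k, w (f k) with hgdef
  set Φ : (Fin n → ℝ) → ℝ := fun w => ∑ i ∈ S, ∏ _k : Fin m, w i with hΦdef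
  have hΦeq : ∀ w : Fin n → ℝ, Φ w = ∑ i ∈ S, w i ^ m := by
    intro w
    refine Finset.sum_congr rfl fun i _ => ?_
    rw [Finset.prod_const, Finset.card_univ, Fintype.card_fin]
  have hsumS : ∀ w : Fin n → ℝ, (∀ i, i ∉ S → w i = 0) → ∑ i ∈ S, w i ^ m = ∑ i, w i ^ m := by
    intro w hw
    refine Finset.sum_subset (Finset.subset_univ S) fun i _ hi => ?_
    rw [hw i hi, zero_pow hm.ne']
  have hΦy : Φ y = 1 := by
    rw [hΦeq, hsumS y hyS, hysum]
  have htpowF : ∀ w : Fin n → ℝ, (∀ i, i ∉ S → w i = 0) → tpow A w = g w := by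
    intro w hw
    rw [hgdef, tpow]
    refine (Finset.sum_subset (Finset.subset_univ F) fun f _ hf => ?_).symm
    simp only [hFdef, Finset.mem_filter, Finset.mem_univ, true_and, not_forall] at hf
    obtain ⟨k, hk⟩ := hf
    rw [Finset.prod_eq_zero (Finset.mem_univ k) (hw _ hk), mul_zero]
  have hgy : g y = lam := (htpowF y hyS).symm
  -- local minimum of g on the level set of Φ
  have hloc : IsLocalMinOn g {w | Φ w = Φ y} y := by
    have hU : ∀ᶠ w in nhds y, ∀ i ∈ S, 0 < w i := by
      rw [Finset.eventually_all]
      intro i hi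
      exact ((continuous_apply i).tendsto y).eventually (eventually_gt_nhds (hSmem i hi))
    unfold IsLocalMinOn IsMinFilter
    filter_upwards [hU.filter_mono nhdsWithin_le_nhds, eventually_mem_nhdsWithin] with w hw hws
    have hws' : Φ w = 1 := by rw [hws, hΦy]
    set w' : Fin n → ℝ := fun i => if i ∈ S then w i else 0 with hw'def
    have hw'0 : ∀ i, i ∉ S → w' i = 0 := by intro i hi; simp [hw'def, hi]
    have hw'K : w' ∈ K := by
      constructor
      · intro i
        by_cases hi : i ∈ S
        · simp only [hw'def, if_pos hi]; exact (hw i hi).le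
        · simp [hw'def, hi]
      · rw [← hsumS w' hw'0]
        rw [show ∑ i ∈ S, w' i ^ m = ∑ i ∈ S, w i ^ m from
          Finset.sum_congr rfl fun i hi => by rw [hw'def]; simp [hi]]
        rw [← hΦeq, hws']
    have hgw : g w' = g w := by
      rw [hgdef]
      refine Finset.sum_congr rfl fun f hf => ?_
      simp only [hFdef, Finset.mem_filter, Finset.mem_univ, true_and] at hf
      congr 1
      exact Finset.prod_congr rfl fun k _ => by rw [hw'def]; simp [hf k]
    calc g y = tpow A y := hgy.trans hlamdef
    _ ≤ tpow A w' := hymin hw'K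
    _ = g w' := htpowF w' hw'0
    _ = g w := hgw
  -- derivatives
  set G : (Fin n → ℝ) →L[ℝ] ℝ :=
    ∑ f ∈ F, A f • (∑ k : Fin m, (∏ j ∈ Finset.univ.erase k, y (f j)) •
      (ContinuousLinearMap.proj (f k) : (Fin n → ℝ) →L[ℝ] ℝ)) with hGdef
  set Φ' : (Fin n → ℝ) →L[ℝ] ℝ :=
    ∑ i ∈ S, (∑ k : Fin m, (∏ _j ∈ Finset.univ.erase k, y i) •
      (ContinuousLinearMap.proj i : (Fin n → ℝ) →L[ℝ] ℝ)) with hΦ'def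
  have hG : HasStrictFDerivAt g G y := by
    refine HasStrictFDerivAt.fun_sum fun f _ => ?_
    exact (HasStrictFDerivAt.finset_prod fun k _ =>
      hasStrictFDerivAt_apply (f k) y).const_mul (A f)
  have hΦ : HasStrictFDerivAt Φ Φ' y := by
    refine HasStrictFDerivAt.fun_sum fun i _ => ?_
    exact HasStrictFDerivAt.finset_prod fun k _ => hasStrictFDerivAt_apply i y
  have hextr : IsLocalExtrOn g {w | Φ w = Φ y} y := Or.inl hloc
  obtain ⟨a, b, hab, habeq⟩ := hextr.exists_multipliers_of_hasStrictFDerivAt_1d hΦ hG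
  have happ0 : ∀ w : Fin n → ℝ,
      ∑ i ∈ S, a * (y i ^ (m - 1) * (↑m * w i))
        + ∑ f ∈ F, ∑ k : Fin m,
            b * (A f * ((∏ j ∈ Finset.univ.erase k, y (f j)) * w (f k))) = 0 := by
    intro w
    have h0 := ContinuousLinearMap.ext_iff.mp habeq w
    simp [hGdef, hΦ'def, ContinuousLinearMap.sum_apply, Finset.mul_sum, mul_assoc] at h0
    rw [← h0]
    congr 1
    exact Finset.sum_congr rfl fun i _ => by ring
  have happ : ∀ w : Fin n → ℝ,
      a * ((m : ℝ) * ∑ i ∈ S, y i ^ (m - 1) * w i)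
        + b * (∑ f ∈ F, ∑ k : Fin m,
            A f * ((∏ j ∈ Finset.univ.erase k, y (f j)) * w (f k))) = 0 := by
    intro w
    have e1 : a * ((m : ℝ) * ∑ i ∈ S, y i ^ (m - 1) * w i)
        = ∑ i ∈ S, a * (y i ^ (m - 1) * ((m : ℝ) * w i)) := by
      rw [Finset.mul_sum, Finset.mul_sum]
      exact Finset.sum_congr rfl fun i _ => by ring
    have e2 : b * (∑ f ∈ F, ∑ k : Fin m,
          A f * ((∏ j ∈ Finset.univ.erase k, y (f j)) * w (f k)))
        = ∑ f ∈ F, ∑ k : Fin m,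
            b * (A f * ((∏ j ∈ Finset.univ.erase k, y (f j)) * w (f k))) := by
      rw [Finset.mul_sum]
      exact Finset.sum_congr rfl fun f _ => by rw [Finset.mul_sum]
    rw [e1, e2]
    exact happ0 w
  -- evaluate at y (Euler identities)
  have hyy : ∑ i ∈ S, y i ^ (m - 1) * y i = 1 := by
    calc ∑ i ∈ S, y i ^ (m - 1) * y i = ∑ i ∈ S, y i ^ m := by
          refine Finset.sum_congr rfl fun i _ => ?_
          rw [← pow_succ, Nat.sub_add_cancel hm]
    _ = ∑ i, y i ^ m := hsumS y hyS
    _ = 1 := hysum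
  have hGy : ∑ f ∈ F, ∑ k : Fin m,
      A f * ((∏ j ∈ Finset.univ.erase k, y (f j)) * y (f k)) = (m : ℝ) * lam := by
    have hf : ∀ f : Fin m → Fin n, ∑ k : Fin m,
        A f * ((∏ j ∈ Finset.univ.erase k, y (f j)) * y (f k))
          = (m : ℝ) * (A f * ∏ k, y (f k)) := by
      intro f
      have hk : ∀ k : Fin m,
          A f * ((∏ j ∈ Finset.univ.erase k, y (f j)) * y (f k))
            = A f * ∏ k', y (f k') := by
        intro k
        rw [mul_comm (∏ j ∈ Finset.univ.erase k, y (f j)) (y (f k)),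
          Finset.mul_prod_erase Finset.univ (fun j => y (f j)) (Finset.mem_univ k)]
      rw [Finset.sum_congr rfl fun k _ => hk k, Finset.sum_const, Finset.card_univ,
        Fintype.card_fin, nsmul_eq_mul]
    rw [Finset.sum_congr rfl fun f _ => hf f, ← Finset.mul_sum]
    exact congrArg (fun r => (m : ℝ) * r) hgy
  have hy_eq : a * (m : ℝ) + b * ((m : ℝ) * lam) = 0 := by
    have h3 := happ y
    rw [hyy, hGy] at h3
    simpa using h3
  have hb : b ≠ 0 := by
    intro hb0
    rw [hb0] at hy_eq
    simp at hy_eq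
    rcases hy_eq with h | h
    · exact hab (by simp [h, hb0, Prod.ext_iff])
    · exact hmR (by exact_mod_cast h)
  have ha : a = -(b * lam) := by
    apply mul_right_cancel₀ hmR
    have h4 := hy_eq
    ring_nf at h4 ⊢
    linarith
  -- evaluate at coordinate directions
  refine ⟨S, lam, y, hSne, hlam, hSmem, fun i hi => ?_⟩
  have h1 : ∑ i' ∈ S, y i' ^ (m - 1) * (Pi.single i 1 : Fin n → ℝ) i' = y i ^ (m - 1) := by
    rw [Finset.sum_eq_single_of_mem i hi]
    · rw [Pi.single_eq_same, mul_one]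
    · intro j _ hj
      rw [Pi.single_eq_of_ne hj, mul_zero]
  have h2 : ∑ f ∈ F, ∑ k : Fin m,
      A f * ((∏ j ∈ Finset.univ.erase k, y (f j)) * (Pi.single i 1 : Fin n → ℝ) (f k))
        = (m : ℝ) * tcontr hm A S y i := by
    rw [Finset.sum_comm]
    have hk : ∀ k : Fin m, ∑ f ∈ F,
        A f * ((∏ j ∈ Finset.univ.erase k, y (f j)) * (Pi.single i 1 : Fin n → ℝ) (f k))
          = tcontr hm A S y i := by
      intro k
      rw [← sym_contr hm A hA S y i k]
      rw [show Finset.univ.filter (fun f : Fin m → Fin n => f k = i ∧ ∀ j, f j ∈ S)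
          = F.filter (fun f => f k = i) from by
        ext f; simp only [hFdef, Finset.mem_filter, Finset.mem_univ, true_and]; tauto]
      conv_rhs => rw [Finset.sum_filter]
      refine Finset.sum_congr rfl fun f _ => ?_
      by_cases hfk : f k = i
      · rw [if_pos hfk, hfk, Pi.single_eq_same, mul_one]
      · rw [if_neg hfk, Pi.single_eq_of_ne hfk, mul_zero, mul_zero]
    rw [Finset.sum_congr rfl fun k _ => hk k, Finset.sum_const, Finset.card_univ,
      Fintype.card_fin, nsmul_eq_mul]
  have h3 := happ (Pi.single i 1 : Fin n → ℝ)
  rw [h1, h2, ha] at h3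
  have hbm : b * (m : ℝ) ≠ 0 := mul_ne_zero hb hmR
  have key : b * (m : ℝ) * (tcontr hm A S y i - lam * y i ^ (m - 1)) = 0 := by
    linear_combination h3
  have h5 := (mul_eq_zero.mp key).resolve_left hbm
  linarith [sub_eq_zero.mp h5]

lemma forward {m n : ℕ} (hm : 0 < m) (A : (Fin m → Fin n) → ℝ) (hSC : StrictCoposT A) :
    ¬ ∃ (S : Finset (Fin n)) (lam : ℝ) (v : Fin n → ℝ),
        S.Nonempty ∧ lam ≤ 0 ∧ (∀ i ∈ S, 0 < v i) ∧
        ∀ i ∈ S, tcontr hm A S v i = lam * v i ^ (m - 1) := by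
  rintro ⟨S, lam, v, hS, hlam, hv, heig⟩
  classical
  set x : Fin n → ℝ := fun i => if i ∈ S then v i else 0 with hxdef
  have hx0 : ∀ i, 0 ≤ x i := by
    intro i
    by_cases hi : i ∈ S
    · simp [hxdef, hi]; exact (hv i hi).le
    · simp [hxdef, hi]
  have hxne : x ≠ 0 := by
    obtain ⟨i, hi⟩ := hS
    intro h0
    have : x i = 0 := congrFun h0 i
    rw [hxdef] at this
    simp [hi] at this
    exact absurd this (hv i hi).ne'
  have h1 : tpow A x = ∑ f ∈ Finset.univ.filter (fun f : Fin m → Fin n => ∀ k, f k ∈ S),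
      A f * ∏ k, x (f k) := by
    rw [tpow]
    refine (Finset.sum_subset (Finset.subset_univ _) fun f _ hf => ?_).symm
    simp only [Finset.mem_filter, Finset.mem_univ, true_and, not_forall] at hf
    obtain ⟨k, hk⟩ := hf
    rw [Finset.prod_eq_zero (Finset.mem_univ k) (by simp [hxdef, hk]), mul_zero]
  have h2 : ∀ i ∈ S, tcontr hm A S x i = tcontr hm A S v i := by
    intro i _
    unfold tcontr
    refine Finset.sum_congr rfl fun f hf => ?_
    simp only [Finset.mem_filter, Finset.mem_univ, true_and] at hf
    congr 1
    exact Finset.prod_congr rfl fun k _ => by simp [hxdef, hf.2 k]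
  have h3 : tpow A x = lam * ∑ i ∈ S, v i ^ m := by
    rw [h1, ← pairing hm A S x, Finset.mul_sum]
    refine Finset.sum_congr rfl fun i hi => ?_
    rw [h2 i hi, heig i hi, hxdef]
    simp only [if_pos hi]
    rw [show v i * (lam * v i ^ (m - 1)) = lam * (v i ^ (m - 1) * v i) by ring,
      ← pow_succ, Nat.sub_add_cancel hm]
  have hsumpos : 0 < ∑ i ∈ S, v i ^ m := by
    obtain ⟨i, hi⟩ := hS
    exact Finset.sum_pos' (fun j hj => pow_nonneg (hv j hj).le m) ⟨i, hi, pow_pos (hv i hi) m⟩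
  have hle : tpow A x ≤ 0 := by
    rw [h3]
    exact mul_nonpos_of_nonpos_of_nonneg hlam hsumpos.le
  exact absurd (hSC x hx0 hxne) (not_lt.mpr hle)

theorem stmt8 {m n : ℕ} (hm : 0 < m) (A : (Fin m → Fin n) → ℝ) (hA : SymT A) :
    StrictCoposT A ↔
      ¬ ∃ (S : Finset (Fin n)) (lam : ℝ) (v : Fin n → ℝ),
        S.Nonempty ∧ lam ≤ 0 ∧ (∀ i ∈ S, 0 < v i) ∧
        ∀ i ∈ S, tcontr hm A S v i = lam * v i ^ (m - 1) := by
  constructor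
  · exact forward hm A
  · intro h
    by_contra hSC
    exact h (backward hm A hA hSC)
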